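/- The quotient algebra B = k⟨a,b⟩/(ab+ba, a²+b²) is infinite dimensional over k; in fact the images of the powers aⁿ for n ≥ 0 are linearly independent in B. -/

import Mathlib

noncomputable section

variable {k : Type*} [Field k] [CharZero k]

def Fa (k : Type*) [Field k] : FreeAlgebra k (Fin 2) := FreeAlgebra.ι k 0
def Fb (k : Type*) [Field k] : FreeAlgebra k (Fin 2) := FreeAlgebra.ι k 1

/-- Relations ab+ba = 0 and a²+b² = 0. -/
inductive Rel8 (k : Type*) [Field k] :
    FreeAlgebra k (Fin 2) → FreeAlgebra k (Fin 2) → Prop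
  | anticomm : Rel8 k (Fa k * Fb k + Fb k * Fa k) 0
  | equation : Rel8 k (Fa k ^ 2 + Fb k ^ 2) 0

open Polynomial Matrix

/-- The diagonal matrix diag(X, -X). -/
def MA (k : Type*) [Field k] : Matrix (Fin 2) (Fin 2) k[X] := diagonal ![X, -X]
/-- The matrix [[0,X],[-X,0]]. -/
def MB (k : Type*) [Field k] : Matrix (Fin 2) (Fin 2) k[X] := !![0, X; -X, 0]

omit [CharZero k] in
lemma MA_eq : MA k = !![X, 0; 0, -X] := by
  unfold MA
  ext i j
  fin_cases i <;> fin_cases j <;> simp [diagonal]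

omit [CharZero k] in
lemma rel_anticomm : MA k * MB k + MB k * MA k = 0 := by
  rw [MA_eq, MB]
  ext i j
  fin_cases i <;> fin_cases j <;> simp [Matrix.mul_apply, Fin.sum_univ_two]

omit [CharZero k] in
lemma rel_eq : MA k ^ 2 + MB k ^ 2 = 0 := by
  rw [MA_eq, MB, pow_two, pow_two]
  ext i j
  fin_cases i <;> fin_cases j <;>
    simp [Matrix.mul_apply, Fin.sum_univ_two, mul_comm]

/-- The representation of the quotient algebra on 2×2 matrices over k[X]. -/
def rep (k : Type*) [Field k] :
    RingQuot (Rel8 k) →ₐ[k] Matrix (Fin 2) (Fin 2) k[X] :=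
  RingQuot.liftAlgHom k ⟨FreeAlgebra.lift k ![MA k, MB k], by
    rintro x y (h | h) <;>
      simp only [Fa, Fb, map_add, _root_.map_mul, map_pow, FreeAlgebra.lift_ι_apply, map_zero,
        Matrix.cons_val_zero, Matrix.cons_val_one, Matrix.head_cons]
    · exact rel_anticomm
    · exact rel_eq⟩

omit [CharZero k] in
lemma rep_a : rep k (RingQuot.mkAlgHom k (Rel8 k) (Fa k)) = MA k := by
  rw [rep, RingQuot.liftAlgHom_mkAlgHom_apply]
  simp [Fa, FreeAlgebra.lift_ι_apply]

/-- Entry (0,0) as a k-linear map. -/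
def entry00 (k : Type*) [Field k] : Matrix (Fin 2) (Fin 2) k[X] →ₗ[k] k[X] where
  toFun M := M 0 0
  map_add' _ _ := rfl
  map_smul' _ _ := rfl

lemma key : LinearIndependent k fun n : ℕ =>
    (RingQuot.mkAlgHom k (Rel8 k) (Fa k)) ^ n := by
  have hX : LinearIndependent k fun n : ℕ => (X : k[X]) ^ n := by
    have h := (Polynomial.basisMonomials k).linearIndependent
    simpa [coe_basisMonomials, monomial_one_right_eq_X_pow] using h
  apply LinearIndependent.of_comp ((entry00 k).comp (rep k).toLinearMap)
  have heq : (⇑((entry00 k).comp (rep k).toLinearMap) ∘ fun n : ℕ =>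
      (RingQuot.mkAlgHom k (Rel8 k) (Fa k)) ^ n) = fun n : ℕ => (X : k[X]) ^ n := by
    funext n
    simp only [Function.comp_apply, LinearMap.comp_apply, AlgHom.toLinearMap_apply, map_pow,
      rep_a, entry00, LinearMap.coe_mk, AddHom.coe_mk, MA, Matrix.diagonal_pow,
      Matrix.diagonal_apply_eq, Pi.pow_apply]
    exact (by simp : (diagonal (![(X : k[X]), -X] ^ n)) 0 0 = X ^ n)
  rw [heq]
  exact hX

theorem infinite_dimensional_quotient :
    (LinearIndependent k fun n : ℕ =>
      (RingQuot.mkAlgHom k (Rel8 k) (Fa k)) ^ n) ∧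
    ¬ FiniteDimensional k (RingQuot (Rel8 k)) := by
  refine ⟨key, fun h => ?_⟩
  haveI := key (k := k) |>.finite
  exact not_finite ℕ

end
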